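/- For the toric code on a k × k square lattice on the torus (n = 2k² qubits, one per edge), the vertex operators A_s and face operators B_p satisfy Π_s A_s = I and Π_p B_p = I, and the number of independent stabilizer generators is 2k² - 2, so the code encodes exactly 2 logical qubits. -/

import Mathlib

/-- Edges of the `k × k` toric lattice: horizontal edges (left) and vertical
edges (right), each labelled by a lattice site. -/
abbrev ToricEdge (k : ℕ) := (Fin k × Fin k) ⊕ (Fin k × Fin k)

/-- The `𝔽₂` row of the vertex (star) operator `A_s`: the indicator vector of
the four edges incident to the vertex `s` (horizontal edges at `s` and at
`(s.1, s.2 - 1)`, vertical edges at `s` and `(s.1 - 1, s.2)`, indices mod `k`). -/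
def vertexRow (k : ℕ) (s : Fin k × Fin k) : ToricEdge k → ZMod 2 :=
  Sum.elim
    (fun e => (if e = s then 1 else 0) +
      (if e.1 = s.1 ∧ ((e.2 : ℕ) + 1) % k = (s.2 : ℕ) then 1 else 0))
    (fun e => (if e = s then 1 else 0) +
      (if ((e.1 : ℕ) + 1) % k = (s.1 : ℕ) ∧ e.2 = s.2 then 1 else 0))

/-- The `𝔽₂` row of the face (plaquette) operator `B_p`: the indicator vector
of the four boundary edges of the face `p`. -/
def faceRow (k : ℕ) (p : Fin k × Fin k) : ToricEdge k → ZMod 2 :=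
  Sum.elim
    (fun e => (if e = p then 1 else 0) +
      (if (e.1 : ℕ) = ((p.1 : ℕ) + 1) % k ∧ e.2 = p.2 then 1 else 0))
    (fun e => (if e = p then 1 else 0) +
      (if e.1 = p.1 ∧ (e.2 : ℕ) = ((p.2 : ℕ) + 1) % k then 1 else 0))

/-- The symplectic `𝔽₂` representation of `A_s`: `X`-part is `vertexRow`,
`Z`-part is zero. -/
def vertexFull (k : ℕ) (s : Fin k × Fin k) : ToricEdge k ⊕ ToricEdge k → ZMod 2 :=
  Sum.elim (vertexRow k s) 0

/-- The symplectic `𝔽₂` representation of `B_p`: `X`-part is zero, `Z`-part is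
`faceRow`. -/
def faceFull (k : ℕ) (p : Fin k × Fin k) : ToricEdge k ⊕ ToricEdge k → ZMod 2 :=
  Sum.elim 0 (faceRow k p)

section Aux

variable {k : ℕ}

/-- Successor mod `k`. -/
private def nx (hk : 0 < k) (i : Fin k) : Fin k := ⟨((i : ℕ) + 1) % k, Nat.mod_lt _ hk⟩

/-- Predecessor mod `k`. -/
private def px (hk : 0 < k) (i : Fin k) : Fin k :=
  ⟨((i : ℕ) + k - 1) % k, Nat.mod_lt _ hk⟩

private lemma nx_px (hk : 0 < k) (i : Fin k) : nx hk (px hk i) = i := by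
  apply Fin.ext
  show (((i : ℕ) + k - 1) % k + 1) % k = i
  rw [Nat.mod_add_mod]
  have h1 : (i : ℕ) + k - 1 + 1 = (i : ℕ) + k := by omega
  rw [h1, Nat.add_mod_right, Nat.mod_eq_of_lt i.isLt]

private lemma px_nx (hk : 0 < k) (i : Fin k) : px hk (nx hk i) = i := by
  apply Fin.ext
  show (((i : ℕ) + 1) % k + k - 1) % k = i
  have h1 : ((i : ℕ) + 1) % k + k - 1 = ((i : ℕ) + 1) % k + (k - 1) := by omega
  rw [h1, Nat.mod_add_mod]
  have h2 : (i : ℕ) + 1 + (k - 1) = (i : ℕ) + k := by omega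
  rw [h2, Nat.add_mod_right, Nat.mod_eq_of_lt i.isLt]

private lemma sum_ind (c : Fin k × Fin k → ZMod 2) (s0 : Fin k × Fin k)
    (P : Fin k × Fin k → Prop) [DecidablePred P] (h : ∀ s, P s ↔ s = s0) :
    ∑ s, c s * (if P s then (1 : ZMod 2) else 0) = c s0 := by
  simp only [mul_ite, mul_one, mul_zero]
  rw [Finset.sum_congr rfl fun s _ => if_congr (h s) rfl rfl]
  simp

/-- evaluate `∑ s, c s • vertexRow k s` at a horizontal edge. -/
private lemma vertex_eval_h (hk : 0 < k) (c : Fin k × Fin k → ZMod 2) (e : Fin k × Fin k) :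
    ∑ s, c s * vertexRow k s (Sum.inl e) = c e + c (e.1, nx hk e.2) := by
  simp only [vertexRow, Sum.elim_inl, mul_add]
  rw [Finset.sum_add_distrib]
  congr 1
  · exact sum_ind c e _ (fun s => by constructor <;> (intro h; exact h.symm))
  · refine sum_ind c (e.1, nx hk e.2) _ (fun s => ?_)
    constructor
    · rintro ⟨h1, h2⟩
      exact Prod.ext h1.symm (Fin.ext h2.symm)
    · rintro rfl
      exact ⟨rfl, rfl⟩

private lemma vertex_eval_v (hk : 0 < k) (c : Fin k × Fin k → ZMod 2) (e : Fin k × Fin k) :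
    ∑ s, c s * vertexRow k s (Sum.inr e) = c e + c (nx hk e.1, e.2) := by
  simp only [vertexRow, Sum.elim_inr, mul_add]
  rw [Finset.sum_add_distrib]
  congr 1
  · exact sum_ind c e _ (fun s => by constructor <;> (intro h; exact h.symm))
  · refine sum_ind c (nx hk e.1, e.2) _ (fun s => ?_)
    constructor
    · rintro ⟨h1, h2⟩
      exact Prod.ext (Fin.ext h1.symm) h2.symm
    · rintro rfl
      exact ⟨rfl, rfl⟩

private lemma face_eval_h (hk : 0 < k) (c : Fin k × Fin k → ZMod 2) (e : Fin k × Fin k) :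
    ∑ p, c p * faceRow k p (Sum.inl e) = c e + c (px hk e.1, e.2) := by
  simp only [faceRow, Sum.elim_inl, mul_add]
  rw [Finset.sum_add_distrib]
  congr 1
  · exact sum_ind c e _ (fun s => by constructor <;> (intro h; exact h.symm))
  · refine sum_ind c (px hk e.1, e.2) _ (fun p => ?_)
    constructor
    · rintro ⟨h1, h2⟩
      have he : e.1 = nx hk p.1 := Fin.ext h1
      refine Prod.ext ?_ h2.symm
      rw [he, px_nx]
    · rintro rfl
      refine ⟨?_, rfl⟩
      show (e.1 : ℕ) = ((px hk e.1 : Fin k) : ℕ).succ % k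
      have := nx_px hk e.1
      have h2 := congrArg (fun x : Fin k => (x : ℕ)) this
      simpa [nx, Nat.succ_eq_add_one] using h2.symm

private lemma face_eval_v (hk : 0 < k) (c : Fin k × Fin k → ZMod 2) (e : Fin k × Fin k) :
    ∑ p, c p * faceRow k p (Sum.inr e) = c e + c (e.1, px hk e.2) := by
  simp only [faceRow, Sum.elim_inr, mul_add]
  rw [Finset.sum_add_distrib]
  congr 1
  · exact sum_ind c e _ (fun s => by constructor <;> (intro h; exact h.symm))
  · refine sum_ind c (e.1, px hk e.2) _ (fun p => ?_)
    constructor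
    · rintro ⟨h1, h2⟩
      have he : e.2 = nx hk p.2 := Fin.ext h2
      refine Prod.ext h1.symm ?_
      rw [he, px_nx]
    · rintro rfl
      refine ⟨rfl, ?_⟩
      show ((e.2 : ℕ)) = ((px hk e.2 : Fin k) : ℕ).succ % k
      have := nx_px hk e.2
      have h2 := congrArg (fun x : Fin k => (x : ℕ)) this
      simpa [nx, Nat.succ_eq_add_one] using h2.symm

/-- A function on the torus invariant under both coordinate shifts is constant. -/
private lemma const_of_shift (hk : 0 < k) (c : Fin k × Fin k → ZMod 2)
    (h1 : ∀ e : Fin k × Fin k, c (e.1, nx hk e.2) = c e)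
    (h2 : ∀ e : Fin k × Fin k, c (nx hk e.1, e.2) = c e) :
    ∀ e, c e = c (⟨0, hk⟩, ⟨0, hk⟩) := by
  have row : ∀ (i j : Fin k), c (i, j) = c (i, ⟨0, hk⟩) := by
    intro i j
    obtain ⟨m, hm⟩ := j
    induction m with
    | zero => rfl
    | succ n ih =>
      have hn : n < k := Nat.lt_of_succ_lt hm
      have hx : nx hk (⟨n, hn⟩ : Fin k) = ⟨n + 1, hm⟩ := Fin.ext (Nat.mod_eq_of_lt hm)
      calc c (i, ⟨n + 1, hm⟩) = c (i, nx hk ⟨n, hn⟩) := by rw [hx]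
      _ = c (i, ⟨n, hn⟩) := h1 (i, ⟨n, hn⟩)
      _ = c (i, ⟨0, hk⟩) := ih hn
  have col : ∀ (i : Fin k), c (i, ⟨0, hk⟩) = c (⟨0, hk⟩, ⟨0, hk⟩) := by
    intro i
    obtain ⟨m, hm⟩ := i
    induction m with
    | zero => rfl
    | succ n ih =>
      have hn : n < k := Nat.lt_of_succ_lt hm
      have hx : nx hk (⟨n, hn⟩ : Fin k) = ⟨n + 1, hm⟩ := Fin.ext (Nat.mod_eq_of_lt hm)
      calc c (⟨n + 1, hm⟩, (⟨0, hk⟩ : Fin k)) = c (nx hk ⟨n, hn⟩, ⟨0, hk⟩) := by rw [hx]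
      _ = c (⟨n, hn⟩, ⟨0, hk⟩) := h2 (⟨n, hn⟩, ⟨0, hk⟩)
      _ = c (⟨0, hk⟩, ⟨0, hk⟩) := ih hn
  intro e
  calc c e = c (e.1, e.2) := rfl
  _ = c (e.1, ⟨0, hk⟩) := row e.1 e.2
  _ = c (⟨0, hk⟩, ⟨0, hk⟩) := col e.1

private lemma sum_vertexFull (hk : 0 < k) : ∑ s : Fin k × Fin k, vertexFull k s = 0 := by
  funext x
  rw [Finset.sum_apply]
  rcases x with e | e
  · simp only [vertexFull, Sum.elim_inl]
    have h1 : ∀ e : ToricEdge k,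
        ∑ s : Fin k × Fin k, vertexRow k s e = 0 := by
      intro e
      rcases e with e | e
      · have := vertex_eval_h hk (fun _ => 1) e
        simpa using this.trans (by decide : (1 : ZMod 2) + 1 = 0)
      · have := vertex_eval_v hk (fun _ => 1) e
        simpa using this.trans (by decide : (1 : ZMod 2) + 1 = 0)
    exact h1 e
  · simp [vertexFull]

private lemma sum_faceFull (hk : 0 < k) : ∑ p : Fin k × Fin k, faceFull k p = 0 := by
  funext x
  rw [Finset.sum_apply]
  rcases x with e | e
  · simp [faceFull]
  · simp only [faceFull, Sum.elim_inr]
    rcases e with e | e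
    · have := face_eval_h hk (fun _ => 1) e
      simpa using this.trans (by decide : (1 : ZMod 2) + 1 = 0)
    · have := face_eval_v hk (fun _ => 1) e
      simpa using this.trans (by decide : (1 : ZMod 2) + 1 = 0)

private lemma zmod2_cancel {a b : ZMod 2} (h : a + b = 0) : b = a := by
  revert h; revert a b; decide

private lemma ker_vertex (hk : 0 < k) :
    LinearMap.ker (Fintype.linearCombination (ZMod 2) (vertexFull k)) =
      Submodule.span (ZMod 2) {(fun _ => 1 : Fin k × Fin k → ZMod 2)} := by
  apply le_antisymm
  · intro c hc
    rw [LinearMap.mem_ker, Fintype.linearCombination_apply] at hc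
    have heval : ∀ x : ToricEdge k ⊕ ToricEdge k,
        ∑ s, c s * vertexFull k s x = 0 := by
      intro x
      have := congrFun hc x
      rw [Finset.sum_apply] at this
      simpa [smul_eq_mul] using this
    have h1 : ∀ e : Fin k × Fin k, c (e.1, nx hk e.2) = c e := by
      intro e
      have := heval (Sum.inl (Sum.inl e))
      simp only [vertexFull, Sum.elim_inl] at this
      rw [vertex_eval_h hk c e] at this
      exact zmod2_cancel this
    have h2 : ∀ e : Fin k × Fin k, c (nx hk e.1, e.2) = c e := by
      intro e
      have := heval (Sum.inl (Sum.inr e))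
      simp only [vertexFull, Sum.elim_inl] at this
      rw [vertex_eval_v hk c e] at this
      exact zmod2_cancel this
    rw [Submodule.mem_span_singleton]
    refine ⟨c (⟨0, hk⟩, ⟨0, hk⟩), ?_⟩
    funext e
    simp [smul_eq_mul, (const_of_shift hk c h1 h2 e).symm]
  · rw [Submodule.span_le, Set.singleton_subset_iff]
    rw [SetLike.mem_coe, LinearMap.mem_ker, Fintype.linearCombination_apply]
    simpa using sum_vertexFull hk

private lemma ker_face (hk : 0 < k) :
    LinearMap.ker (Fintype.linearCombination (ZMod 2) (faceFull k)) =
      Submodule.span (ZMod 2) {(fun _ => 1 : Fin k × Fin k → ZMod 2)} := by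
  apply le_antisymm
  · intro c hc
    rw [LinearMap.mem_ker, Fintype.linearCombination_apply] at hc
    have heval : ∀ x : ToricEdge k ⊕ ToricEdge k,
        ∑ p, c p * faceFull k p x = 0 := by
      intro x
      have := congrFun hc x
      rw [Finset.sum_apply] at this
      simpa [smul_eq_mul] using this
    have h1 : ∀ e : Fin k × Fin k, c (px hk e.1, e.2) = c e := by
      intro e
      have := heval (Sum.inr (Sum.inl e))
      simp only [faceFull, Sum.elim_inr] at this
      rw [face_eval_h hk c e] at this
      exact zmod2_cancel this
    have h2 : ∀ e : Fin k × Fin k, c (e.1, px hk e.2) = c e := by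
      intro e
      have := heval (Sum.inr (Sum.inr e))
      simp only [faceFull, Sum.elim_inr] at this
      rw [face_eval_v hk c e] at this
      exact zmod2_cancel this
    have h1' : ∀ e : Fin k × Fin k, c (e.1, nx hk e.2) = c e := by
      intro e
      have := h2 (e.1, nx hk e.2)
      rw [px_nx] at this
      exact this.symm
    have h2' : ∀ e : Fin k × Fin k, c (nx hk e.1, e.2) = c e := by
      intro e
      have := h1 (nx hk e.1, e.2)
      rw [px_nx] at this
      exact this.symm
    rw [Submodule.mem_span_singleton]
    refine ⟨c (⟨0, hk⟩, ⟨0, hk⟩), ?_⟩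
    funext e
    simp [smul_eq_mul, (const_of_shift hk c h1' h2' e).symm]
  · rw [Submodule.span_le, Set.singleton_subset_iff]
    rw [SetLike.mem_coe, LinearMap.mem_ker, Fintype.linearCombination_apply]
    simpa using sum_faceFull hk

private lemma toric_one_ne_zero (hk : 0 < k) : (fun _ => 1 : Fin k × Fin k → ZMod 2) ≠ 0 := by
  intro h
  have := congrFun h (⟨0, hk⟩, ⟨0, hk⟩)
  simp at this

private lemma finrank_span_vertex (hk : 0 < k) :
    Module.finrank (ZMod 2)
      (Submodule.span (ZMod 2) (Set.range (vertexFull k))) = k * k - 1 := by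
  have h := LinearMap.finrank_range_add_finrank_ker
    (Fintype.linearCombination (ZMod 2) (vertexFull k))
  rw [Fintype.range_linearCombination, ker_vertex hk] at h
  rw [finrank_span_singleton (toric_one_ne_zero hk)] at h
  have hd : Module.finrank (ZMod 2) (Fin k × Fin k → ZMod 2) = k * k := by
    rw [Module.finrank_pi]
    simp [Fintype.card_prod]
  rw [hd] at h
  omega

private lemma finrank_span_face (hk : 0 < k) :
    Module.finrank (ZMod 2)
      (Submodule.span (ZMod 2) (Set.range (faceFull k))) = k * k - 1 := by
  have h := LinearMap.finrank_range_add_finrank_ker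
    (Fintype.linearCombination (ZMod 2) (faceFull k))
  rw [Fintype.range_linearCombination, ker_face hk] at h
  rw [finrank_span_singleton (toric_one_ne_zero hk)] at h
  have hd : Module.finrank (ZMod 2) (Fin k × Fin k → ZMod 2) = k * k := by
    rw [Module.finrank_pi]
    simp [Fintype.card_prod]
  rw [hd] at h
  omega

end Aux

theorem toric_code_relations_and_rank (k : ℕ) (hk : 1 ≤ k) :
    (∑ s : Fin k × Fin k, vertexFull k s = 0) ∧
    (∑ p : Fin k × Fin k, faceFull k p = 0) ∧
    Module.finrank (ZMod 2)
      (Submodule.span (ZMod 2)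
        (Set.range (vertexFull k) ∪ Set.range (faceFull k))) = 2 * k ^ 2 - 2 := by
  have hk' : 0 < k := hk
  refine ⟨sum_vertexFull hk', sum_faceFull hk', ?_⟩
  set V := Submodule.span (ZMod 2) (Set.range (vertexFull k)) with hV
  set F := Submodule.span (ZMod 2) (Set.range (faceFull k)) with hF
  rw [Submodule.span_union, ← hV, ← hF]
  -- the two spans intersect trivially
  have hdisj : V ⊓ F = ⊥ := by
    rw [eq_bot_iff]
    rintro f hf
    obtain ⟨hfV, hfF⟩ := Submodule.mem_inf.mp hf
    have hVle : V ≤ LinearMap.ker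
        (LinearMap.funLeft (ZMod 2) (ZMod 2) (Sum.inr : ToricEdge k → ToricEdge k ⊕ ToricEdge k)) := by
      rw [hV, Submodule.span_le]
      rintro _ ⟨s, rfl⟩
      rw [SetLike.mem_coe, LinearMap.mem_ker]
      funext x
      rfl
    have hFle : F ≤ LinearMap.ker
        (LinearMap.funLeft (ZMod 2) (ZMod 2) (Sum.inl : ToricEdge k → ToricEdge k ⊕ ToricEdge k)) := by
      rw [hF, Submodule.span_le]
      rintro _ ⟨p, rfl⟩
      rw [SetLike.mem_coe, LinearMap.mem_ker]
      funext x
      rfl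
    have h1 := hVle hfV
    have h2 := hFle hfF
    rw [LinearMap.mem_ker] at h1 h2
    rw [Submodule.mem_bot]
    funext x
    rcases x with x | x
    · exact congrFun h2 x
    · exact congrFun h1 x
  have hsum := Submodule.finrank_sup_add_finrank_inf_eq V F
  rw [hdisj, finrank_bot, add_zero] at hsum
  rw [hsum, finrank_span_vertex hk', finrank_span_face hk']
  have h1 : 1 ≤ k * k := Nat.one_le_iff_ne_zero.mpr (by positivity)
  rw [pow_two]
  omega
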